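/- Let E : [0,∞) → [0,∞) be Borel measurable. Then: (i) ∫ E dP ≤ 1 holds for every P ∈ 𝒰₀₀⁺ if and only if ∫_0^x E(t) dt ≤ x for every x > 0; (ii) ∫ E dP ≤ 1 holds for every P ∈ 𝒰₀⁺ if and only if ∫_0^x E(t) dt ≤ x for every x > 0 and E(0) ≤ 1. In other words, these two conditions characterize exactly all e-values for jumpless continuous monotonicity and for continuous monotonicity with a possible atom at 0, respectively. -/

import Mathlib

open MeasureTheory Set

/-- `𝒰₀⁺`: Borel probability measures on `ℝ` concentrated on `[0,∞)` whose CDF is concave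
on `[0,∞)`. -/
def U0plus : Set (Measure ℝ) :=
  {P | IsProbabilityMeasure P ∧ P (Ici (0 : ℝ)) = 1 ∧
    ConcaveOn ℝ (Ici (0 : ℝ)) (fun x => (P (Iic x)).toReal)}

/-- `𝒰₀₀⁺`: the jumpless continuous monotone class, i.e. members of `𝒰₀⁺` with no atom
at `0`. -/
def U00plus : Set (Measure ℝ) :=
  {P | P ∈ U0plus ∧ P {(0 : ℝ)} = 0}


open Filter Topology Metric
open scoped ENNReal

section Aux



-- layer identity
lemma vol_layer (c : ℝ≥0∞) :
    volume ({s : ℝ | ENNReal.ofReal s < c} ∩ Ioi (0:ℝ)) = c := by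
  rcases eq_or_ne c ∞ with rfl | hc
  · have : {s : ℝ | ENNReal.ofReal s < ∞} ∩ Ioi (0:ℝ) = Ioi 0 := by
      ext s; simp [ENNReal.ofReal_lt_top]
    rw [this, Real.volume_Ioi]
  · have : {s : ℝ | ENNReal.ofReal s < c} ∩ Ioi (0:ℝ) = Ioo 0 c.toReal := by
      ext s
      simp only [mem_inter_iff, mem_setOf_eq, mem_Ioi, mem_Ioo]
      constructor
      · rintro ⟨h1, h2⟩
        exact ⟨h2, (ENNReal.ofReal_lt_iff_lt_toReal h2.le hc).mp h1⟩
      · rintro ⟨h1, h2⟩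
        exact ⟨(ENNReal.ofReal_lt_iff_lt_toReal h1.le hc).mpr h2, h1⟩
    rw [this, Real.volume_Ioo, sub_zero, ENNReal.ofReal_toReal hc]

-- concave increment lemma
lemma concave_inc {F : ℝ → ℝ} (hc : ConcaveOn ℝ (Ici (0:ℝ)) F) {a b h : ℝ}
    (ha : 0 ≤ a) (hab : a ≤ b) (hh : 0 ≤ h) : F (b + h) - F b ≤ F (a + h) - F a := by
  rcases eq_or_lt_of_le hh with rfl | hh
  · simp
  rcases eq_or_lt_of_le hab with rfl | hab
  · simp
  have hb : (0:ℝ) ≤ b := ha.trans hab.le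
  have hcv : ConvexOn ℝ (Ici (0:ℝ)) (-F) := hc.neg
  -- secant through a : endpoints a+h and b+h
  have s1 := hcv.secant_mono (a := a) (x := a + h) (y := b + h)
    (by simpa using ha) (by simp [mem_Ici]; linarith) (by simp [mem_Ici]; linarith)
    (by linarith) (by linarith) (by linarith)
  -- secant through b+h : endpoints a and b
  have s2 := hcv.secant_mono (a := b + h) (x := a) (y := b)
    (by simp [mem_Ici]; linarith) (by simpa using ha) (by simpa using hb)
    (by linarith) (by linarith) hab.le
  simp only [Pi.neg_apply] at s1 s2
  have e1 : (-F (a+h) - -F a) / (a + h - a) = (F a - F (a+h)) / h := by ring_nf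
  have e2 : (-F (b+h) - -F a) / (b + h - a) = (-F a - -F (b+h)) / (a - (b+h)) := by
    rw [← neg_div_neg_eq]; ring_nf
  have e3 : (-F b - -F (b+h)) / (b - (b+h)) = (F b - F (b+h)) / h := by
    rw [← neg_div_neg_eq]; ring_nf
  rw [e1, e2] at s1
  rw [e3] at s2
  have : (F a - F (a+h)) / h ≤ (F b - F (b+h)) / h := s1.trans s2
  have := (div_le_div_iff_of_pos_right hh).mp this
  linarith



variable {P : Measure ℝ}

lemma P_Ioc (hP : IsProbabilityMeasure P) (a b : ℝ) :
    P (Ioc a b) = ENNReal.ofReal ((P (Iic b)).toReal - (P (Iic a)).toReal) := by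
  conv_lhs => rw [← ProbabilityTheory.measure_cdf (μ := P)]
  rw [StieltjesFunction.measure_Ioc, ProbabilityTheory.cdf_eq_real,
    ProbabilityTheory.cdf_eq_real, measureReal_def, measureReal_def]

lemma F_mono (hP : IsProbabilityMeasure P) : Monotone (fun x => (P (Iic x)).toReal) := by
  intro x y hxy
  exact ENNReal.toReal_mono (measure_ne_top _ _) (measure_mono (Iic_subset_Iic.mpr hxy))

lemma F_le_one (hP : IsProbabilityMeasure P) (x : ℝ) : (P (Iic x)).toReal ≤ 1 := by
  have : P (Iic x) ≤ 1 := prob_le_one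
  calc (P (Iic x)).toReal ≤ (1 : ℝ≥0∞).toReal := ENNReal.toReal_mono ENNReal.one_ne_top this
    _ = 1 := by simp

lemma slope_bound (hP : IsProbabilityMeasure P)
    (hconc : ConcaveOn ℝ (Ici (0:ℝ)) fun x => (P (Iic x)).toReal)
    {ε a b : ℝ} (hε : 0 < ε) (ha : ε ≤ a) (hab : a ≤ b) :
    (P (Iic b)).toReal - (P (Iic a)).toReal ≤ (b - a) / ε := by
  set F : ℝ → ℝ := fun x => (P (Iic x)).toReal with hF
  rcases eq_or_lt_of_le hab with rfl | hab
  · simp [hε.le]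
  have hb : 0 < b := hε.trans_le (ha.trans hab.le)
  have hcv : ConvexOn ℝ (Ici (0:ℝ)) (-F) := hconc.neg
  have s1 := hcv.secant_mono (a := 0) (x := ε) (y := b)
    (by simp) (by simp [mem_Ici]; linarith) (by simp [mem_Ici]; linarith)
    (by linarith) (by linarith) (by linarith)
  have s2 := hcv.secant_mono (a := b) (x := 0) (y := a)
    (by simp [mem_Ici]; linarith) (by simp) (by simp [mem_Ici]; linarith)
    (by linarith) (by linarith) (by linarith)
  simp only [Pi.neg_apply, sub_zero, zero_sub] at s1 s2
  have A : (F b - F 0) / b ≤ (F ε - F 0) / ε := by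
    rw [div_le_div_iff₀ hε hb] at s1
    rw [div_le_div_iff₀ hb hε]
    nlinarith [s1]
  have B : (F b - F a) / (b - a) ≤ (F b - F 0) / b := by
    have e1 : (-F 0 - -F b) / -b = -((-F 0 - -F b) / b) := by rw [div_neg]
    have e2 : (-F a - -F b) / (a - b) = -((-F a - -F b) / (b - a)) := by
      rw [show (a - b) = -(b-a) by ring, div_neg]
    rw [e1, e2, neg_le_neg_iff] at s2
    rw [div_le_div_iff₀ (by linarith) hb] at s2 ⊢
    nlinarith [s2]
  have hF0 : 0 ≤ F 0 := ENNReal.toReal_nonneg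
  have hFε : F ε ≤ 1 := F_le_one hP ε
  have hsl : (F b - F a) / (b - a) ≤ 1 / ε := by
    refine (B.trans A).trans ?_
    gcongr
    linarith
  rw [div_le_div_iff₀ (by linarith) hε] at hsl
  rw [le_div_iff₀ hε]
  nlinarith [hsl]

lemma atom_zero (hP : IsProbabilityMeasure P)
    (hconc : ConcaveOn ℝ (Ici (0:ℝ)) fun x => (P (Iic x)).toReal)
    {a : ℝ} (ha : 0 < a) : P {a} = 0 := by
  refine le_antisymm ?_ zero_le
  have key : ∀ h : ℝ, 0 < h → h ≤ a / 2 → P {a} ≤ ENNReal.ofReal (h / (a/2)) := by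
    intro h hh hha
    calc P {a} ≤ P (Ioc (a - h) a) := measure_mono (by
          intro x hx; simp only [mem_singleton_iff] at hx; subst hx
          exact ⟨by linarith, le_refl _⟩)
      _ = ENNReal.ofReal ((P (Iic a)).toReal - (P (Iic (a-h))).toReal) := P_Ioc hP _ _
      _ ≤ ENNReal.ofReal (h / (a/2)) := by
          apply ENNReal.ofReal_le_ofReal
          have := slope_bound hP hconc (ε := a/2) (a := a - h) (b := a)
            (by linarith) (by linarith) (by linarith)
          simpa using this
  have htend : Tendsto (fun h : ℝ => ENNReal.ofReal (h / (a/2))) (𝓝[>] (0:ℝ)) (𝓝 0) := by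
    have : Tendsto (fun h : ℝ => h / (a/2)) (𝓝 (0:ℝ)) (𝓝 0) := by
      simpa using (continuous_id.div_const (a/2)).tendsto 0
    have h2 : Tendsto (fun h : ℝ => h / (a/2)) (𝓝[>] (0:ℝ)) (𝓝 0) :=
      this.mono_left nhdsWithin_le_nhds
    have := (ENNReal.continuous_ofReal.tendsto 0).comp h2
    simpa [Function.comp_def] using this
  refine ge_of_tendsto htend ?_
  filter_upwards [Ioo_mem_nhdsGT_of_mem (by exact ⟨le_refl _, by linarith⟩ : (0:ℝ) ∈ Ico 0 (a/2)), self_mem_nhdsWithin] with h hh _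
  exact key h hh.1 hh.2.le





lemma restrict_le_smul_volume (hP : IsProbabilityMeasure P)
    (hconc : ConcaveOn ℝ (Ici (0:ℝ)) fun x => (P (Iic x)).toReal)
    {ε : ℝ} (hε : 0 < ε) :
    P.restrict (Ioi ε) ≤ (ENNReal.ofReal ε)⁻¹ • volume := by
  set F : ℝ → ℝ := fun x => (P (Iic x)).toReal with hF
  have hFrc : ∀ x, ContinuousWithinAt F (Ici x) x := by
    have hEq : F = ⇑(ProbabilityTheory.cdf P) :=
      funext fun x => (ProbabilityTheory.cdf_eq_real P x).symm
    rw [hEq]; exact (ProbabilityTheory.cdf P).right_continuous'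
  set Hst : StieltjesFunction ℝ :=
  { toFun := fun x => max x ε / ε - F (max x ε)
    mono' := by
      intro u v huv
      have h1 : ε ≤ max u ε := le_max_right _ _
      have h2 : max u ε ≤ max v ε := max_le_max huv le_rfl
      have := slope_bound hP hconc hε h1 h2
      simp only
      have : (max v ε - max u ε) / ε = max v ε / ε - max u ε / ε := by ring
      have h3 := slope_bound hP hconc hε h1 h2
      rw [hF] at *
      simp only at *
      linarith [h3, this]
    right_continuous' := by
      intro x
      have hg : ContinuousWithinAt (fun u => u / ε - F u) (Ici (max x ε)) (max x ε) :=
        ((continuous_id.div_const ε).continuousWithinAt).sub (hFrc (max x ε))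
      have hm : ContinuousWithinAt (fun y => max y ε) (Ici x) x :=
        (continuous_id.max continuous_const).continuousWithinAt
      exact ContinuousWithinAt.comp (g := fun u => u / ε - F u)
        (f := fun y => max y ε) (s := Ici x) (t := Ici (max x ε)) hg hm
        (fun y (hy : x ≤ y) => (max_le_max hy le_rfl : max x ε ≤ max y ε)) } with hHst
  have Happ : ∀ x : ℝ, Hst x = max x ε / ε - F (max x ε) := fun _ => rfl
  have key : P.restrict (Ioi ε) + Hst.measure
      = ((ENNReal.ofReal ε)⁻¹ • volume).restrict (Ioi ε) := by
    have hinter : ∀ a b : ℝ, Ioc a b ∩ Ioi ε = Ioc (max a ε) b := by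
      intro a b; ext x
      simp only [mem_inter_iff, mem_Ioc, mem_Ioi, max_lt_iff]
      tauto
    refine Measure.ext_of_Ioc' _ _ (fun a b hab => ?_) (fun a b hab => ?_)
    · simp only [Measure.add_apply, Measure.restrict_apply measurableSet_Ioc,
        Hst.measure_Ioc]
      exact ENNReal.add_ne_top.mpr ⟨measure_ne_top _ _, ENNReal.ofReal_ne_top⟩
    · simp only [Measure.add_apply, Measure.restrict_apply measurableSet_Ioc,
        Hst.measure_Ioc, hinter, Measure.smul_apply, smul_eq_mul, Happ]
      rcases le_or_gt b ε with hbε | hbε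
      · have h1 : Ioc (max a ε) b = (∅ : Set ℝ) :=
          Ioc_eq_empty (by simp only [not_lt]; exact hbε.trans (le_max_right a ε))
        rw [h1, max_eq_right hbε, max_eq_right (hab.le.trans hbε)]
        simp
      · set a' := max a ε with ha'
        have hεa' : ε ≤ a' := le_max_right _ _
        have ha'b : a' ≤ b := max_le (hab.le) hbε.le
        have hFmono : F a' ≤ F b := F_mono hP ha'b
        have hslope : F b - F a' ≤ (b - a') / ε := slope_bound hP hconc hε hεa' ha'b
        rw [max_eq_left hbε.le, P_Ioc hP a' b, Real.volume_Ioc]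
        have e1 : (b / ε - F b - (a' / ε - F a'))
            = ((b - a') / ε - (F b - F a')) := by ring
        rw [e1, ← ENNReal.ofReal_add (by linarith) (by linarith)]
        have e2 : F b - F a' + ((b - a') / ε - (F b - F a')) = (b - a') / ε := by ring
        rw [e2, ENNReal.ofReal_div_of_pos hε, div_eq_mul_inv, mul_comm]
  calc P.restrict (Ioi ε) ≤ P.restrict (Ioi ε) + Hst.measure := Measure.le_add_right le_rfl
    _ = ((ENNReal.ofReal ε)⁻¹ • volume).restrict (Ioi ε) := key
    _ ≤ (ENNReal.ofReal ε)⁻¹ • volume := Measure.restrict_le_self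

lemma restrict_Ioi_ac (hP : IsProbabilityMeasure P)
    (hconc : ConcaveOn ℝ (Ici (0:ℝ)) fun x => (P (Iic x)).toReal) :
    P.restrict (Ioi (0:ℝ)) ≪ volume := by
  intro s hs
  set t := toMeasurable volume s with htdef
  have hts : s ⊆ t := subset_toMeasurable _ _
  have htm : MeasurableSet t := measurableSet_toMeasurable _ _
  have ht : volume t = 0 := by rw [htdef, measure_toMeasurable]; exact hs
  have hcover : t ∩ Ioi (0:ℝ) ⊆ ⋃ n : ℕ, t ∩ Ioi (((n:ℝ)+1))⁻¹ := by
    rintro x ⟨hxt, hx0⟩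
    obtain ⟨n, hn⟩ := exists_nat_gt x⁻¹
    refine mem_iUnion.mpr ⟨n, hxt, ?_⟩
    have hx0' : (0:ℝ) < x := hx0
    have h1 : x⁻¹ < (n:ℝ)+1 := hn.trans (by linarith)
    have h2 : (0:ℝ) < (n:ℝ)+1 := by positivity
    calc (((n:ℝ)+1))⁻¹ < (x⁻¹)⁻¹ := by
          apply inv_strictAnti₀ (by positivity) h1
      _ = x := inv_inv x
  have hnull : ∀ n : ℕ, P (t ∩ Ioi (((n:ℝ)+1))⁻¹) = 0 := by
    intro n
    have hε : (0:ℝ) < (((n:ℝ)+1))⁻¹ := by positivity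
    have hle := restrict_le_smul_volume hP hconc hε
    have h1 : P (t ∩ Ioi (((n:ℝ)+1))⁻¹) = P.restrict (Ioi (((n:ℝ)+1))⁻¹) t :=
      (Measure.restrict_apply htm).symm
    rw [h1]
    refine le_antisymm ?_ zero_le
    calc P.restrict (Ioi (((n:ℝ)+1))⁻¹) t
        ≤ ((ENNReal.ofReal (((n:ℝ)+1))⁻¹)⁻¹ • volume) t := hle t
      _ = 0 := by rw [Measure.smul_apply, smul_eq_mul, ht, mul_zero]
  have : P (t ∩ Ioi (0:ℝ)) = 0 :=
    measure_mono_null hcover (measure_iUnion_null hnull)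
  refine le_antisymm ?_ zero_le
  calc (P.restrict (Ioi 0)) s ≤ (P.restrict (Ioi 0)) t := measure_mono hts
    _ = P (t ∩ Ioi 0) := Measure.restrict_apply htm
    _ = 0 := this



variable {P : Measure ℝ}

lemma rnDeriv_anti (hP : IsProbabilityMeasure P)
    (hconc : ConcaveOn ℝ (Ici (0:ℝ)) fun x => (P (Iic x)).toReal)
    {x y : ℝ} (hx0 : 0 < x) (hxy : x < y)
    (hx : Tendsto (fun r => (P.restrict (Ioi (0:ℝ))) (closedBall x r) / volume (closedBall x r))
      (𝓝[>] 0) (𝓝 ((P.restrict (Ioi (0:ℝ))).rnDeriv volume x)))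
    (hy : Tendsto (fun r => (P.restrict (Ioi (0:ℝ))) (closedBall y r) / volume (closedBall y r))
      (𝓝[>] 0) (𝓝 ((P.restrict (Ioi (0:ℝ))).rnDeriv volume y))) :
    (P.restrict (Ioi (0:ℝ))).rnDeriv volume y ≤ (P.restrict (Ioi (0:ℝ))).rnDeriv volume x := by
  set ν := P.restrict (Ioi (0:ℝ)) with hν
  set F : ℝ → ℝ := fun x => (P (Iic x)).toReal with hF
  refine le_of_tendsto_of_tendsto hy hx ?_
  have hmem : Ioo (0:ℝ) (min x (y - x)) ∈ 𝓝[>] (0:ℝ) :=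
    Ioo_mem_nhdsGT_of_mem ⟨le_rfl, lt_min hx0 (by linarith)⟩
  filter_upwards [hmem] with r hr
  obtain ⟨hr0, hrm⟩ := hr
  have hrx : r < x := hrm.trans_le (min_le_left _ _)
  have hryx : r < y - x := hrm.trans_le (min_le_right _ _)
  have hxr : 0 < x - r := by linarith
  have hyr : 0 < y - r := by linarith
  have hnum : ν (closedBall y r) ≤ ν (closedBall x r) := by
    have u1 : ν (closedBall y r) ≤ P (Icc (y-r) (y+r)) := by
      rw [Real.closedBall_eq_Icc]
      exact (Measure.restrict_le_self (s := Ioi (0:ℝ))) _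
    have u2 : P (Icc (y-r) (y+r)) ≤ ENNReal.ofReal (F (y+r) - F (y-r)) := by
      have hsub : Icc (y-r) (y+r) ⊆ {y-r} ∪ Ioc (y-r) (y+r) := by
        intro z hz
        rcases eq_or_lt_of_le hz.1 with heq | hlt
        · exact Or.inl (by simp [heq.symm])
        · exact Or.inr ⟨hlt, hz.2⟩
      calc P (Icc (y-r) (y+r)) ≤ P {y-r} + P (Ioc (y-r) (y+r)) :=
            (measure_mono hsub).trans (measure_union_le _ _)
        _ = ENNReal.ofReal (F (y+r) - F (y-r)) := by
            rw [atom_zero hP hconc hyr, zero_add, P_Ioc hP]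
    have u3 : F (y+r) - F (y-r) ≤ F (x+r) - F (x-r) := by
      have := concave_inc hconc (a := x - r) (b := y - r) (h := 2*r)
        hxr.le (by linarith) (by linarith)
      have e1 : y - r + 2*r = y + r := by ring
      have e2 : x - r + 2*r = x + r := by ring
      rw [e1, e2] at this
      exact this
    have u4 : ENNReal.ofReal (F (x+r) - F (x-r)) ≤ ν (closedBall x r) := by
      rw [← P_Ioc hP]
      rw [Real.closedBall_eq_Icc]
      have : ν (Ioc (x-r) (x+r)) = P (Ioc (x-r) (x+r)) := by
        rw [hν, Measure.restrict_apply measurableSet_Ioc]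
        congr 1
        rw [inter_eq_left]
        intro z hz
        exact lt_trans hxr hz.1
      rw [← this]
      exact measure_mono Ioc_subset_Icc_self
    calc ν (closedBall y r) ≤ ENNReal.ofReal (F (y+r) - F (y-r)) := u1.trans u2
      _ ≤ ENNReal.ofReal (F (x+r) - F (x-r)) := ENNReal.ofReal_le_ofReal u3
      _ ≤ ν (closedBall x r) := u4
  have hvol : volume (closedBall y r) = volume (closedBall x r) := by
    rw [Real.volume_closedBall, Real.volume_closedBall]
  rw [hvol]
  exact ENNReal.div_le_div_right hnum _

lemma key_int (E : ℝ → ℝ) (hEm : Measurable E)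
    (hG : ∀ x : ℝ, 0 < x → ∫⁻ t in Ioc (0:ℝ) x, ENNReal.ofReal (E t) ≤ ENNReal.ofReal x)
    (hP : IsProbabilityMeasure P)
    (hconc : ConcaveOn ℝ (Ici (0:ℝ)) fun x => (P (Iic x)).toReal) :
    ∫⁻ t in Ioi (0:ℝ), ENNReal.ofReal (E t) ∂P ≤ P (Ioi 0) := by
  set E' : ℝ → ℝ≥0∞ := fun t => ENNReal.ofReal (E t) with hE'
  have hE'm : Measurable E' := ENNReal.measurable_ofReal.comp hEm
  set ν := P.restrict (Ioi (0:ℝ)) with hν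
  have hac : ν ≪ volume := restrict_Ioi_ac hP hconc
  set f := ν.rnDeriv volume with hf
  have hfm : Measurable f := Measure.measurable_rnDeriv _ _
  have hwd : volume.withDensity f = ν := Measure.withDensity_rnDeriv_eq ν volume hac
  set S : Set ℝ := {x | Tendsto (fun r => ν (closedBall x r) / volume (closedBall x r))
    (𝓝[>] 0) (𝓝 (f x))} with hSdef
  have hS : ∀ᵐ x ∂(volume : Measure ℝ), x ∈ S := Besicovitch.ae_tendsto_rnDeriv ν volume
  have hSc : volume Sᶜ = 0 := by
    rw [ae_iff] at hS
    exact hS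
  have hanti : ∀ x y : ℝ, x ∈ S → y ∈ S → 0 < x → x < y → f y ≤ f x := fun x y hx hy h0 hlt =>
    rnDeriv_anti hP hconc h0 hlt hx hy
  -- inner bound
  have hinner : ∀ s : ℝ,
      ∫⁻ t in Ioi (0:ℝ), ({u : ℝ | ENNReal.ofReal s < f u}.indicator E' t) ∂volume
      ≤ volume ({u : ℝ | ENNReal.ofReal s < f u} ∩ Ioi 0) := by
    intro s
    set A := {u : ℝ | ENNReal.ofReal s < f u} with hA
    have hAm : MeasurableSet A := measurableSet_lt measurable_const hfm
    rw [lintegral_indicator hAm, Measure.restrict_restrict hAm]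
    set T := (A ∩ Ioi 0) ∩ S with hT
    have hae : ((A ∩ Ioi 0 : Set ℝ) : Set ℝ) =ᵐ[volume] (T : Set ℝ) := by
      rw [MeasureTheory.ae_eq_set]
      constructor
      · refine measure_mono_null ?_ hSc
        rintro z ⟨hz1, hz2⟩
        intro hzS
        exact hz2 ⟨hz1, hzS⟩
      · have : T \ (A ∩ Ioi 0) = ∅ := diff_eq_empty.mpr inter_subset_left
        rw [this]
        exact measure_empty
    have hinit : ∀ t, t ∈ S → 0 < t → (∃ y ∈ T, t < y) → t ∈ T := by
      rintro t htS ht0 ⟨y, hyT, hty⟩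
      obtain ⟨⟨hyA, hy0⟩, hyS⟩ := hyT
      exact ⟨⟨lt_of_lt_of_le hyA (hanti t y htS hyS ht0 hty), ht0⟩, htS⟩
    rw [setLIntegral_congr hae, measure_congr hae]
    by_cases hne : T.Nonempty
    · by_cases hbdd : BddAbove T
      · set a := sSup T with ha
        obtain ⟨t0, ht0⟩ := hne
        have ha0 : 0 < a := lt_of_lt_of_le ht0.1.2 (le_csSup hbdd ht0)
        have hTsub2 : T ⊆ Ioc 0 a := fun t ht => ⟨ht.1.2, le_csSup hbdd ht⟩
        have h1 : ∫⁻ t in T, E' t ∂volume ≤ ENNReal.ofReal a :=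
          (lintegral_mono_set hTsub2).trans (hG a ha0)
        refine h1.trans ?_
        have hsub : Ioo 0 a ∩ S ⊆ T := by
          rintro t ⟨⟨ht0', hta⟩, htS⟩
          obtain ⟨y, hyT, hty⟩ := exists_lt_of_lt_csSup ⟨t0, ht0⟩ hta
          exact hinit t htS ht0' ⟨y, hyT, hty⟩
        calc ENNReal.ofReal a = volume (Ioo (0:ℝ) a) := by rw [Real.volume_Ioo, sub_zero]
          _ ≤ volume (Ioo (0:ℝ) a ∩ S) + volume Sᶜ := by
              refine (measure_mono ?_).trans (measure_union_le _ _)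
              intro z hz
              by_cases hzS : z ∈ S
              · exact Or.inl ⟨hz, hzS⟩
              · exact Or.inr hzS
          _ = volume (Ioo (0:ℝ) a ∩ S) := by rw [hSc, add_zero]
          _ ≤ volume T := measure_mono hsub
      · have hsub : S ∩ Ioi 0 ⊆ T := by
          rintro t ⟨htS, ht0⟩
          obtain ⟨y, hyT, hty⟩ := not_bddAbove_iff.mp hbdd t
          exact hinit t htS ht0 ⟨y, hyT, hty⟩
        have hTtop : volume T = ∞ := by
          refine top_le_iff.mp ?_
          calc (⊤:ℝ≥0∞) = volume (Ioi (0:ℝ)) := Real.volume_Ioi.symm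
            _ ≤ volume (S ∩ Ioi (0:ℝ)) + volume Sᶜ := by
                refine (measure_mono ?_).trans (measure_union_le _ _)
                intro z hz
                by_cases hzS : z ∈ S
                · exact Or.inl ⟨hzS, hz⟩
                · exact Or.inr hzS
            _ = volume (S ∩ Ioi (0:ℝ)) := by rw [hSc, add_zero]
            _ ≤ volume T := measure_mono hsub
        rw [hTtop]
        exact le_top
    · rw [not_nonempty_iff_eq_empty.mp hne]
      simp
  -- layer identity
  have layer : ∀ c : ℝ≥0∞,
      ∫⁻ s in Ioi (0:ℝ), ({u : ℝ | ENNReal.ofReal u < c}.indicator (fun _ => (1:ℝ≥0∞)) s) ∂volume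
        = c := by
    intro c
    have hm : MeasurableSet {u : ℝ | ENNReal.ofReal u < c} :=
      measurableSet_lt ENNReal.measurable_ofReal measurable_const
    rw [lintegral_indicator hm, Measure.restrict_restrict hm, setLIntegral_one]
    exact vol_layer c
  -- two-variable functions
  set g1 : ℝ → ℝ → ℝ≥0∞ := fun t s => if ENNReal.ofReal s < f t then E' t else 0 with hg1
  set g2 : ℝ → ℝ → ℝ≥0∞ := fun t s => if ENNReal.ofReal s < f t then 1 else 0 with hg2
  have hprodm : MeasurableSet {p : ℝ × ℝ | ENNReal.ofReal p.2 < f p.1} :=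
    measurableSet_lt (ENNReal.measurable_ofReal.comp measurable_snd) (hfm.comp measurable_fst)
  have hg1m : Measurable (Function.uncurry g1) := by
    have : Function.uncurry g1 = fun p : ℝ × ℝ =>
        if ENNReal.ofReal p.2 < f p.1 then E' p.1 else 0 := rfl
    rw [this]
    exact Measurable.ite hprodm (hE'm.comp measurable_fst) measurable_const
  have hg2m : Measurable (Function.uncurry g2) := by
    have : Function.uncurry g2 = fun p : ℝ × ℝ =>
        if ENNReal.ofReal p.2 < f p.1 then 1 else 0 := rfl
    rw [this]
    exact Measurable.ite hprodm measurable_const measurable_const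
  have hzero : ∫⁻ t in Iic (0:ℝ), f t * E' t ∂volume = 0 := by
    have h0 : ∫⁻ t in Iic (0:ℝ), f t ∂volume = 0 := by
      rw [← withDensity_apply f measurableSet_Iic, hwd, hν,
        Measure.restrict_apply measurableSet_Iic]
      convert measure_empty (μ := P)
      ext z
      simp only [mem_inter_iff, mem_Iic, mem_Ioi, mem_empty_iff_false, iff_false, not_and, not_lt]
      exact fun h => h
    have hf0 : f =ᵐ[volume.restrict (Iic (0:ℝ))] 0 := (lintegral_eq_zero_iff hfm).mp h0
    calc ∫⁻ t in Iic (0:ℝ), f t * E' t ∂volume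
        = ∫⁻ t in Iic (0:ℝ), 0 ∂volume := lintegral_congr_ae (by
          filter_upwards [hf0] with t ht
          rw [ht]
          exact zero_mul _)
      _ = 0 := lintegral_zero
  calc ∫⁻ t in Ioi (0:ℝ), E' t ∂P = ∫⁻ t, E' t ∂ν := rfl
    _ = ∫⁻ t, f t * E' t ∂volume := by
        rw [← hwd, lintegral_withDensity_eq_lintegral_mul volume hfm hE'm]
        rfl
    _ = ∫⁻ t in Ioi (0:ℝ), f t * E' t ∂volume + ∫⁻ t in Iic (0:ℝ), f t * E' t ∂volume := by
        rw [← compl_Ioi]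
        exact (lintegral_add_compl _ measurableSet_Ioi).symm
    _ = ∫⁻ t in Ioi (0:ℝ), f t * E' t ∂volume := by rw [hzero, add_zero]
    _ = ∫⁻ t in Ioi (0:ℝ), ∫⁻ s in Ioi (0:ℝ), g1 t s ∂volume ∂volume := by
        refine lintegral_congr fun t => ?_
        have hm' : MeasurableSet {u : ℝ | ENNReal.ofReal u < f t} :=
          measurableSet_lt ENNReal.measurable_ofReal measurable_const
        have e1 : ∀ s : ℝ, g1 t s
            = ({u : ℝ | ENNReal.ofReal u < f t}.indicator (fun _ => E' t) s) := by
          intro s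
          by_cases h : ENNReal.ofReal s < f t <;>
            simp [hg1, Set.indicator_apply, h, mem_setOf_eq]
        rw [lintegral_congr e1, lintegral_indicator hm', Measure.restrict_restrict hm',
          setLIntegral_const, vol_layer (f t)]
        exact mul_comm _ _
    _ = ∫⁻ s in Ioi (0:ℝ), ∫⁻ t in Ioi (0:ℝ), g1 t s ∂volume ∂volume :=
        lintegral_lintegral_swap hg1m.aemeasurable
    _ ≤ ∫⁻ s in Ioi (0:ℝ), volume ({u : ℝ | ENNReal.ofReal s < f u} ∩ Ioi 0) ∂volume := by
        refine lintegral_mono fun s => ?_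
        have e1 : ∀ t : ℝ, g1 t s = {u : ℝ | ENNReal.ofReal s < f u}.indicator E' t := by
          intro t
          by_cases h : ENNReal.ofReal s < f t <;>
            simp [hg1, Set.indicator_apply, h, mem_setOf_eq]
        rw [lintegral_congr e1]
        exact hinner s
    _ = ∫⁻ s in Ioi (0:ℝ), ∫⁻ t in Ioi (0:ℝ), g2 t s ∂volume ∂volume := by
        refine lintegral_congr fun s => ?_
        have hAm : MeasurableSet {u : ℝ | ENNReal.ofReal s < f u} :=
          measurableSet_lt measurable_const hfm
        have e1 : ∀ t : ℝ, g2 t s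
            = {u : ℝ | ENNReal.ofReal s < f u}.indicator (fun _ => (1:ℝ≥0∞)) t := by
          intro t
          by_cases h : ENNReal.ofReal s < f t <;>
            simp [hg2, Set.indicator_apply, h, mem_setOf_eq]
        rw [lintegral_congr e1, lintegral_indicator hAm, Measure.restrict_restrict hAm,
          setLIntegral_one]
    _ = ∫⁻ t in Ioi (0:ℝ), ∫⁻ s in Ioi (0:ℝ), g2 t s ∂volume ∂volume :=
        (lintegral_lintegral_swap hg2m.aemeasurable).symm
    _ = ∫⁻ t in Ioi (0:ℝ), f t ∂volume := by
        refine lintegral_congr fun t => ?_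
        have e1 : ∀ s : ℝ, g2 t s
            = ({u : ℝ | ENNReal.ofReal u < f t}.indicator (fun _ => (1:ℝ≥0∞)) s) := by
          intro s
          by_cases h : ENNReal.ofReal s < f t <;>
            simp [hg2, Set.indicator_apply, h, mem_setOf_eq]
        rw [lintegral_congr e1]
        exact layer (f t)
    _ = P (Ioi 0) := by
        rw [← withDensity_apply f measurableSet_Ioi, hwd, hν, Measure.restrict_apply_self]


end Aux

section Aux2

lemma concaveOn_congr {s : Set ℝ} {f g : ℝ → ℝ} (h : ConcaveOn ℝ s f) (he : EqOn f g s) :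
    ConcaveOn ℝ s g := by
  refine ⟨h.1, fun x hx y hy a b ha hb hab => ?_⟩
  have hm : a • x + b • y ∈ s := h.1 hx hy ha hb hab
  rw [← he hx, ← he hy, ← he hm]
  exact h.2 hx hy ha hb hab

lemma int_le_one {P : Measure ℝ} (E : ℝ → ℝ) (hEm : Measurable E)
    (hG : ∀ x : ℝ, 0 < x → ∫⁻ t in Ioc (0:ℝ) x, ENNReal.ofReal (E t) ≤ ENNReal.ofReal x)
    (hP : IsProbabilityMeasure P) (h1 : P (Ici (0:ℝ)) = 1)
    (hconc : ConcaveOn ℝ (Ici (0:ℝ)) fun x => (P (Iic x)).toReal)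
    (hatom : ENNReal.ofReal (E 0) * P {0} ≤ P {0}) :
    ∫⁻ x, ENNReal.ofReal (E x) ∂P ≤ 1 := by
  have hIio : P (Iio (0:ℝ)) = 0 := by
    have h2 := measure_compl (μ := P) (s := Ici (0:ℝ)) measurableSet_Ici (measure_ne_top _ _)
    rw [compl_Ici, h1, measure_univ] at h2
    rw [h2]
    simp
  have hsplit : ∫⁻ x, ENNReal.ofReal (E x) ∂P
      = ∫⁻ x in Ioi (0:ℝ), ENNReal.ofReal (E x) ∂P
        + ∫⁻ x in Iic (0:ℝ), ENNReal.ofReal (E x) ∂P := by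
    rw [← compl_Ioi]
    exact (lintegral_add_compl _ measurableSet_Ioi).symm
  have hIic : ∫⁻ x in Iic (0:ℝ), ENNReal.ofReal (E x) ∂P
      = ENNReal.ofReal (E 0) * P {0} := by
    have hae : ((Iic (0:ℝ) : Set ℝ) : Set ℝ) =ᵐ[P] ({0} : Set ℝ) := by
      rw [MeasureTheory.ae_eq_set]
      constructor
      · refine measure_mono_null ?_ hIio
        rintro z ⟨hz1, hz2⟩
        have hz1' : z ≤ 0 := hz1
        have hzne : z ≠ 0 := fun h => hz2 (by simp [h])
        exact lt_of_le_of_ne hz1' hzne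
      · refine measure_mono_null ?_ (measure_empty (μ := P))
        rintro z ⟨hz1, hz2⟩
        exact hz2 (le_of_eq hz1)
    rw [setLIntegral_congr hae, lintegral_singleton]
  rw [hsplit, hIic]
  calc ∫⁻ x in Ioi (0:ℝ), ENNReal.ofReal (E x) ∂P + ENNReal.ofReal (E 0) * P {0}
      ≤ P (Ioi 0) + P {0} := add_le_add (key_int E hEm hG hP hconc) hatom
    _ = P ({0} ∪ Ioi 0) := by
        rw [measure_union (by simp : Disjoint ({0} : Set ℝ) (Ioi 0)) measurableSet_Ioi,
          add_comm]
    _ ≤ 1 := prob_le_one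

/-- the uniform distribution on `(0, x]` -/
noncomputable def unif (x : ℝ) : Measure ℝ :=
  (ENNReal.ofReal x)⁻¹ • volume.restrict (Ioc (0:ℝ) x)

lemma unif_prob {x : ℝ} (hx : 0 < x) : IsProbabilityMeasure (unif x) := by
  constructor
  rw [unif, Measure.smul_apply, smul_eq_mul, Measure.restrict_apply_univ, Real.volume_Ioc,
    sub_zero]
  exact ENNReal.inv_mul_cancel (by simp [hx]) ENNReal.ofReal_ne_top

lemma unif_Ici {x : ℝ} (hx : 0 < x) : unif x (Ici (0:ℝ)) = 1 := by
  rw [unif, Measure.smul_apply, smul_eq_mul, Measure.restrict_apply measurableSet_Ici]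
  have : Ici (0:ℝ) ∩ Ioc 0 x = Ioc 0 x := by
    rw [inter_eq_right]
    exact fun z hz => hz.1.le
  rw [this, Real.volume_Ioc, sub_zero]
  exact ENNReal.inv_mul_cancel (by simp [hx]) ENNReal.ofReal_ne_top

lemma unif_atom {x : ℝ} (hx : 0 < x) : unif x {(0:ℝ)} = 0 := by
  rw [unif, Measure.smul_apply, smul_eq_mul,
    Measure.restrict_apply (measurableSet_singleton _)]
  have : ({(0:ℝ)} : Set ℝ) ∩ Ioc 0 x = ∅ := by
    ext z
    simp only [mem_inter_iff, mem_singleton_iff, mem_Ioc, mem_empty_iff_false, iff_false,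
      not_and]
    rintro rfl h
    exact absurd h (lt_irrefl 0)
  rw [this]
  simp

lemma unif_concave {x : ℝ} (hx : 0 < x) :
    ConcaveOn ℝ (Ici (0:ℝ)) fun t => ((unif x) (Iic t)).toReal := by
  have hcdf : ∀ t : ℝ, 0 ≤ t → ((unif x) (Iic t)).toReal = (1/x) * min t x := by
    intro t ht
    rw [unif, Measure.smul_apply, smul_eq_mul, Measure.restrict_apply measurableSet_Iic]
    have : Iic t ∩ Ioc 0 x = Ioc 0 (min t x) := by
      ext z
      simp only [mem_inter_iff, mem_Iic, mem_Ioc, le_min_iff]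
      tauto
    rw [this, Real.volume_Ioc, sub_zero, ENNReal.toReal_mul, ENNReal.toReal_inv,
      ENNReal.toReal_ofReal hx.le, ENNReal.toReal_ofReal (le_min ht hx.le)]
    ring
  have hbase : ConcaveOn ℝ (Ici (0:ℝ)) fun t : ℝ => min t x := by
    have h1 : ConcaveOn ℝ (Ici (0:ℝ)) (id : ℝ → ℝ) :=
      (concaveOn_id (convex_Ici 0))
    have h2 : ConcaveOn ℝ (Ici (0:ℝ)) fun _ : ℝ => x := concaveOn_const x (convex_Ici 0)
    exact h1.inf h2
  have hsmul : ConcaveOn ℝ (Ici (0:ℝ)) fun t : ℝ => (1/x) * min t x := by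
    have := hbase.smul (c := 1/x) (by positivity)
    simpa only [smul_eq_mul] using this
  exact concaveOn_congr hsmul fun t ht => (hcdf t ht).symm

lemma unif_lint {x : ℝ} (hx : 0 < x) (E : ℝ → ℝ)
    (h : ∫⁻ t, ENNReal.ofReal (E t) ∂(unif x) ≤ 1) :
    ∫⁻ t in Ioc (0:ℝ) x, ENNReal.ofReal (E t) ≤ ENNReal.ofReal x := by
  rw [unif, lintegral_smul_measure] at h
  have hne : ENNReal.ofReal x ≠ 0 := by simp [hx]
  calc ∫⁻ t in Ioc (0:ℝ) x, ENNReal.ofReal (E t)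
      = ENNReal.ofReal x * ((ENNReal.ofReal x)⁻¹
        * ∫⁻ t in Ioc (0:ℝ) x, ENNReal.ofReal (E t)) := by
        rw [← mul_assoc, ENNReal.mul_inv_cancel hne ENNReal.ofReal_ne_top, one_mul]
    _ ≤ ENNReal.ofReal x * 1 := by
        exact mul_le_mul_right h _
    _ = ENNReal.ofReal x := mul_one _

lemma dirac_concave :
    ConcaveOn ℝ (Ici (0:ℝ)) fun t => ((Measure.dirac (0:ℝ)) (Iic t)).toReal := by
  refine concaveOn_congr (concaveOn_const 1 (convex_Ici 0)) fun t ht => ?_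
  rw [Measure.dirac_apply_of_mem (by exact ht : (0:ℝ) ∈ Iic t)]
  simp

lemma unif_mem {x : ℝ} (hx : 0 < x) : unif x ∈ U00plus :=
  ⟨⟨unif_prob hx, unif_Ici hx, unif_concave hx⟩, unif_atom hx⟩

end Aux2

/-- **polar of `𝒰₀⁺` and `𝒰₀₀⁺`.** For Borel measurable `E : [0,∞) → [0,∞)`:
(i) `∫ E dP ≤ 1` for all `P ∈ 𝒰₀₀⁺` iff `∫₀ˣ E(t) dt ≤ x` for all `x > 0`;
(ii) `∫ E dP ≤ 1` for all `P ∈ 𝒰₀⁺` iff `∫₀ˣ E(t) dt ≤ x` for all `x > 0` and `E(0) ≤ 1`.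
(Integrals are taken in the extended reals.) -/
theorem stmt8 (E : ℝ → ℝ) (hmeas : Measurable E) (hE0 : ∀ x : ℝ, 0 ≤ x → 0 ≤ E x) :
    ((∀ P ∈ U00plus, ∫⁻ x : ℝ, ENNReal.ofReal (E x) ∂P ≤ 1) ↔
      (∀ x : ℝ, 0 < x →
        ∫⁻ t in Ioc (0 : ℝ) x, ENNReal.ofReal (E t) ≤ ENNReal.ofReal x)) ∧
    ((∀ P ∈ U0plus, ∫⁻ x : ℝ, ENNReal.ofReal (E x) ∂P ≤ 1) ↔
      ((∀ x : ℝ, 0 < x →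
        ∫⁻ t in Ioc (0 : ℝ) x, ENNReal.ofReal (E t) ≤ ENNReal.ofReal x) ∧ E 0 ≤ 1)) := by
  constructor
  · constructor
    · intro h x hx
      exact unif_lint hx E (h (unif x) (unif_mem hx))
    · rintro hG P ⟨⟨hprob, h1, hconc⟩, hatom⟩
      refine int_le_one E hmeas hG hprob h1 hconc ?_
      rw [hatom, mul_zero]
  · constructor
    · intro h
      constructor
      · intro x hx
        exact unif_lint hx E (h (unif x) (unif_mem hx).1)
      · have hd : (Measure.dirac (0:ℝ)) ∈ U0plus := by
          refine ⟨inferInstance, ?_, dirac_concave⟩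
          rw [Measure.dirac_apply_of_mem (by simp : (0:ℝ) ∈ Ici (0:ℝ))]
        have := h _ hd
        rw [lintegral_dirac' _ (show Measurable fun a => ENNReal.ofReal (E a) from
          ENNReal.measurable_ofReal.comp hmeas)] at this
        exact ENNReal.ofReal_le_one.mp this
    · rintro ⟨hG, hE0le⟩ P ⟨hprob, h1, hconc⟩
      refine int_le_one E hmeas hG hprob h1 hconc ?_
      calc ENNReal.ofReal (E 0) * P {0} ≤ 1 * P {0} :=
            mul_le_mul_left (ENNReal.ofReal_le_one.mpr hE0le) _
        _ = P {0} := one_mul _
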